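/- Fix ℏ > 0 and an integer N ≥ 1. For all x, p ∈ ℝ, σ_{H_N}^ℏ(x,p) = p · σ_{P_{<N}}^ℏ(x,p) + (i/2) √(ℏN/2) ∫_ℝ ℏ [ψ_{N−1}^ℏ(x − ℏy/2) ψ_N^ℏ(x + ℏy/2) − ψ_N^ℏ(x − ℏy/2) ψ_{N−1}^ℏ(x + ℏy/2)] e^{ipy} dy. -/

import Mathlib

open MeasureTheory Filter

/-- Physicists' Hermite polynomial `h_k(y) = (-1)^k e^{y^2} (d/dy)^k e^{-y^2}`. -/
noncomputable def hermiteH (k : ℕ) (y : ℝ) : ℝ :=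
  (-1)^k * Real.exp (y^2) * iteratedDeriv k (fun t => Real.exp (-t^2)) y

/-- Hermite function `ψ_k^ℏ`. -/
noncomputable def psiH (hbar : ℝ) (k : ℕ) (x : ℝ) : ℝ :=
  (Real.sqrt (Real.sqrt Real.pi * 2^k * (Nat.factorial k) * Real.sqrt hbar))⁻¹ *
    Real.exp (-x^2 / (2*hbar)) * hermiteH k (x / Real.sqrt hbar)

/-- Kernel of the spectral projection `P_{<N}`. -/
noncomputable def KerK (hbar : ℝ) (N : ℕ) (u v : ℝ) : ℝ :=
  ∑ k ∈ Finset.range N, psiH hbar k u * psiH hbar k v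

/-- Kernel of the Zeno Hamiltonian `H_N = P_{<N} p̂ P_{<N}`. -/
noncomputable def KerQ (hbar : ℝ) (N : ℕ) (u v : ℝ) : ℂ :=
  Complex.I * (Real.sqrt (hbar/2) : ℂ) *
    ∑ j ∈ Finset.range (N-1), ((Real.sqrt ((j:ℝ)+1) : ℝ) : ℂ) *
      ((psiH hbar (j+1) u * psiH hbar j v - psiH hbar j u * psiH hbar (j+1) v : ℝ) : ℂ)

/-- Weyl symbol of `P_{<N}`. -/
noncomputable def sigmaP (hbar : ℝ) (N : ℕ) (x p : ℝ) : ℂ :=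
  ∫ y : ℝ, ((hbar * KerK hbar N (x - hbar*y/2) (x + hbar*y/2) : ℝ) : ℂ) *
    Complex.exp (Complex.I * (p:ℂ) * (y:ℂ))

/-- Weyl symbol of `H_N`. -/
noncomputable def sigmaH (hbar : ℝ) (N : ℕ) (x p : ℝ) : ℂ :=
  ∫ y : ℝ, (hbar : ℂ) * KerQ hbar N (x - hbar*y/2) (x + hbar*y/2) *
    Complex.exp (Complex.I * (p:ℂ) * (y:ℂ))


open Polynomial

noncomputable def Hpol : ℕ → Polynomial ℝ
  | 0 => 1
  | n+1 => C 2 * X * Hpol n - derivative (Hpol n)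

lemma Hpol_derivative (n : ℕ) :
    derivative (Hpol (n+1)) = C (2*((n:ℝ)+1)) * Hpol n := by
  induction n with
  | zero => simp [Hpol]
  | succ n ih =>
    rw [show Hpol (n+2) = C 2 * X * Hpol (n+1) - derivative (Hpol (n+1)) from rfl]
    rw [derivative_sub, derivative_mul, derivative_mul, ih]
    rw [derivative_mul, derivative_C,
      show Hpol (n+1) = C 2 * X * Hpol n - derivative (Hpol n) from rfl]
    simp only [derivative_C, derivative_X, zero_mul, mul_one, zero_add]
    push_cast
    simp only [C_add, C_mul, C_1]
    ring

lemma iteratedDeriv_gauss (k : ℕ) :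
    iteratedDeriv k (fun t => Real.exp (-t^2))
      = fun y => (-1)^k * (Hpol k).eval y * Real.exp (-y^2) := by
  induction k with
  | zero => funext y; simp [Hpol]
  | succ k ih =>
    rw [iteratedDeriv_succ, ih]
    funext y
    have h1 : HasDerivAt (fun y : ℝ => -y^2) (-(2*y)) y := by
      simpa using (hasDerivAt_pow 2 y).fun_neg
    have h2 : HasDerivAt (fun y : ℝ => Real.exp (-y^2))
        (Real.exp (-y^2) * (-(2*y))) y := h1.exp
    have h3 : HasDerivAt (fun y : ℝ => (-1:ℝ)^k * (Hpol k).eval y * Real.exp (-y^2))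
        (((-1:ℝ)^k * (derivative (Hpol k)).eval y) * Real.exp (-y^2)
          + ((-1:ℝ)^k * (Hpol k).eval y) * (Real.exp (-y^2) * (-(2*y)))) y := by
      exact (((Hpol k).hasDerivAt y).const_mul ((-1:ℝ)^k)).mul h2
    rw [h3.deriv]
    rw [show Hpol (k+1) = C 2 * X * Hpol k - derivative (Hpol k) from rfl]
    simp only [eval_sub, eval_mul, eval_C, eval_X]
    ring

lemma hermiteH_eq (k : ℕ) (y : ℝ) : hermiteH k y = (Hpol k).eval y := by
  rw [hermiteH, iteratedDeriv_gauss]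
  rw [show (-1:ℝ)^k * Real.exp (y^2) * ((-1)^k * (Hpol k).eval y * Real.exp (-y^2))
    = ((-1)^k)^2 * ((Hpol k).eval y) * (Real.exp (y^2) * Real.exp (-y^2)) by ring]
  rw [← Real.exp_add]
  simp [← pow_mul, pow_mul']

noncomputable def cc (hbar : ℝ) (k : ℕ) : ℝ :=
  (Real.sqrt (Real.sqrt Real.pi * 2^k * (Nat.factorial k) * Real.sqrt hbar))⁻¹

lemma psiH_eq (hbar : ℝ) (k : ℕ) (x : ℝ) :
    psiH hbar k x = cc hbar k * Real.exp (-x^2/(2*hbar)) * (Hpol k).eval (x / Real.sqrt hbar) := by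
  rw [psiH, hermiteH_eq]; rfl

lemma eq_of_sq {a b : ℝ} (ha : 0 ≤ a) (hb : 0 ≤ b) (h : a^2 = b^2) : a = b := by
  rw [← Real.sqrt_sq ha, ← Real.sqrt_sq hb, h]

section
variable {hbar : ℝ} (hh : 0 < hbar)

include hh in
lemma aa_pos (k : ℕ) : 0 < Real.sqrt Real.pi * 2^k * (Nat.factorial k) * Real.sqrt hbar := by
  have h1 : (0:ℝ) < Real.sqrt Real.pi := Real.sqrt_pos.2 Real.pi_pos
  have h2 : (0:ℝ) < Real.sqrt hbar := Real.sqrt_pos.2 hh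
  positivity

include hh in
lemma cc_pos (k : ℕ) : 0 < cc hbar k :=
  inv_pos.2 (Real.sqrt_pos.2 (aa_pos hh k))

include hh in
lemma cc_sq (k : ℕ) :
    cc hbar k ^ 2 = (Real.sqrt Real.pi * 2^k * (Nat.factorial k) * Real.sqrt hbar)⁻¹ := by
  rw [cc, inv_pow, Real.sq_sqrt (aa_pos hh k).le]

include hh in
/-- key coefficient identity: `√((k+1)/(2ℏ)) c_{k+1} = c_k / (2√ℏ)` -/
lemma cc_succ (k : ℕ) :
    Real.sqrt (((k:ℝ)+1)/(2*hbar)) * cc hbar (k+1) = cc hbar k / (2 * Real.sqrt hbar) := by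
  have h2 : (0:ℝ) < Real.sqrt hbar := Real.sqrt_pos.2 hh
  have hpi : (0:ℝ) < Real.sqrt Real.pi := Real.sqrt_pos.2 Real.pi_pos
  refine eq_of_sq (mul_nonneg (Real.sqrt_nonneg _) (cc_pos hh (k+1)).le)
    (div_nonneg (cc_pos hh k).le (by positivity)) ?_
  rw [mul_pow, div_pow, mul_pow, Real.sq_sqrt (by positivity), cc_sq hh, cc_sq hh,
    Real.sq_sqrt hh.le]
  have e1 : (Nat.factorial (k+1) : ℝ) = ((k:ℝ)+1) * (Nat.factorial k : ℝ) := by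
    push_cast [Nat.factorial_succ]; ring
  have hfk : (0:ℝ) < (Nat.factorial k : ℝ) := by positivity
  have hk1 : (0:ℝ) < (k:ℝ)+1 := by positivity
  rw [e1]
  field_simp
  ring

include hh in
/-- `√((j+1)/(2ℏ)) c_j = (j+1) c_{j+1} / √ℏ` -/
lemma cc_pred (j : ℕ) :
    Real.sqrt (((j:ℝ)+1)/(2*hbar)) * cc hbar j = ((j:ℝ)+1) * cc hbar (j+1) / Real.sqrt hbar := by
  have h2 : (0:ℝ) < Real.sqrt hbar := Real.sqrt_pos.2 hh
  have hpi : (0:ℝ) < Real.sqrt Real.pi := Real.sqrt_pos.2 Real.pi_pos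
  refine eq_of_sq (mul_nonneg (Real.sqrt_nonneg _) (cc_pos hh j).le)
    (div_nonneg (mul_nonneg (by positivity) (cc_pos hh (j+1)).le) (Real.sqrt_nonneg _)) ?_
  rw [mul_pow, div_pow, mul_pow, Real.sq_sqrt (by positivity), cc_sq hh, cc_sq hh,
    Real.sq_sqrt hh.le]
  have e1 : (Nat.factorial (j+1) : ℝ) = ((j:ℝ)+1) * (Nat.factorial j : ℝ) := by
    push_cast [Nat.factorial_succ]; ring
  have hfk : (0:ℝ) < (Nat.factorial j : ℝ) := by positivity
  have hk1 : (0:ℝ) < (j:ℝ)+1 := by positivity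
  rw [e1]
  field_simp
  ring

include hh in
lemma psi_hasDerivAt (k : ℕ) (t : ℝ) :
    HasDerivAt (psiH hbar k)
      (Real.sqrt ((k:ℝ)/(2*hbar)) * psiH hbar (k-1) t
        - Real.sqrt (((k:ℝ)+1)/(2*hbar)) * psiH hbar (k+1) t) t := by
  have h2 : (0:ℝ) < Real.sqrt hbar := Real.sqrt_pos.2 hh
  have hbne : Real.sqrt hbar ≠ 0 := ne_of_gt h2
  have hss : Real.sqrt hbar * Real.sqrt hbar = hbar := Real.mul_self_sqrt hh.le
  have hinv : (Real.sqrt hbar)⁻¹ * (Real.sqrt hbar)⁻¹ = hbar⁻¹ := by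
    rw [← mul_inv, hss]
  have hder : HasDerivAt (psiH hbar k)
      (cc hbar k * Real.exp (-t^2/(2*hbar)) *
        ((derivative (Hpol k)).eval (t/Real.sqrt hbar) * (1/Real.sqrt hbar))
       + cc hbar k * (Real.exp (-t^2/(2*hbar)) * (-(2*t)/(2*hbar))) *
          (Hpol k).eval (t/Real.sqrt hbar)) t := by
    have hE : HasDerivAt (fun x : ℝ => Real.exp (-x^2/(2*hbar)))
        (Real.exp (-t^2/(2*hbar)) * (-(2*t)/(2*hbar))) t := by
      have h1 : HasDerivAt (fun x : ℝ => -x^2/(2*hbar)) (-(2*t)/(2*hbar)) t := by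
        simpa [neg_div] using ((hasDerivAt_pow 2 t).neg).div_const (2*hbar)
      exact h1.exp
    have hP : HasDerivAt (fun x : ℝ => (Hpol k).eval (x / Real.sqrt hbar))
        ((derivative (Hpol k)).eval (t/Real.sqrt hbar) * (1/Real.sqrt hbar)) t := by
      have hl : HasDerivAt (fun x : ℝ => x / Real.sqrt hbar) (1/Real.sqrt hbar) t := by
        simpa using (hasDerivAt_id t).div_const (Real.sqrt hbar)
      exact HasDerivAt.comp t ((Hpol k).hasDerivAt _) hl
    have h3 : HasDerivAt
        (fun x => cc hbar k * Real.exp (-x^2/(2*hbar)) * (Hpol k).eval (x/Real.sqrt hbar))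
        (cc hbar k * Real.exp (-t^2/(2*hbar)) *
          ((derivative (Hpol k)).eval (t/Real.sqrt hbar) * (1/Real.sqrt hbar))
         + cc hbar k * (Real.exp (-t^2/(2*hbar)) * (-(2*t)/(2*hbar))) *
            (Hpol k).eval (t/Real.sqrt hbar)) t := by
      have h4 := (hE.const_mul (cc hbar k)).fun_mul hP
      refine h4.congr_deriv ?_
      ring
    exact h3.congr_of_eventuallyEq
      (Filter.Eventually.of_forall fun x => psiH_eq hbar k x)
  convert hder using 1
  simp only [psiH_eq]
  match k with
  | 0 =>
    have hc := cc_succ hh 0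
    have hD0 : derivative (Hpol 0) = 0 := by
      rw [show Hpol 0 = 1 from rfl]; simp
    have h1 : Hpol 1 = C 2 * X := by
      rw [show Hpol 1 = C 2 * X * Hpol 0 - derivative (Hpol 0) from rfl, hD0,
        show Hpol 0 = 1 from rfl]; ring
    simp only [Nat.cast_zero, zero_add, zero_div, Real.sqrt_zero, hD0, h1,
      show Hpol 0 = 1 from rfl, Nat.zero_sub, derivative_one, eval_mul, eval_C, eval_X, eval_one, eval_zero] at hc ⊢
    linear_combination (-(Real.exp (-t^2/(2*hbar)) * (2*(t/Real.sqrt hbar)))) * hc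
      + (-(cc hbar 0 * Real.exp (-t^2/(2*hbar)) * t)) * hinv
  | (j+1) =>
    have h1 := cc_pred hh j
    have h2' := cc_succ hh (j+1)
    have hd := Hpol_derivative j
    have hrec : Hpol (j+2) = C 2 * X * Hpol (j+1) - C (2*((j:ℝ)+1)) * Hpol j := by
      rw [show Hpol (j+2) = C 2 * X * Hpol (j+1) - derivative (Hpol (j+1)) from rfl, hd]
    push_cast at h2' ⊢
    simp only [Nat.add_sub_cancel, hd, hrec, eval_mul, eval_sub, eval_C, eval_X] at h2' ⊢
    linear_combination (Real.exp (-t^2/(2*hbar)) * eval (t/Real.sqrt hbar) (Hpol j)) * h1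
      + (-(Real.exp (-t^2/(2*hbar)) * (2*(t/Real.sqrt hbar)*eval (t/Real.sqrt hbar) (Hpol (j+1))
          - 2*((j:ℝ)+1)*eval (t/Real.sqrt hbar) (Hpol j)))) * h2'
      + (-(cc hbar (j+1) * Real.exp (-t^2/(2*hbar)) * t * eval (t/Real.sqrt hbar) (Hpol (j+1)))) * hinv

lemma poly_gauss_tendsto (Q : Polynomial ℝ) {b : ℝ} (hb : 0 < b) :
    Tendsto (fun y => Q.eval y * Real.exp (-b*y^2)) (cocompact ℝ) (nhds 0) := by
  have h : ∀ y : ℝ, Q.eval y * Real.exp (-b*y^2)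
      = ∑ i ∈ Finset.range (Q.natDegree + 1), Q.coeff i * (y^i * Real.exp (-b*y^2)) := by
    intro y
    rw [Polynomial.eval_eq_sum_range, Finset.sum_mul]
    exact Finset.sum_congr rfl fun i _ => by ring
  simp only [h]
  have : (0:ℝ) = ∑ i ∈ Finset.range (Q.natDegree + 1), (0:ℝ) := by simp
  rw [this]
  refine tendsto_finset_sum _ fun i _ => ?_
  rw [show (0:ℝ) = Q.coeff i * 0 by ring]
  refine Tendsto.const_mul _ ?_
  have hnorm := tendsto_rpow_abs_mul_exp_neg_mul_sq_cocompact hb (i : ℝ)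
  refine squeeze_zero_norm (fun y => ?_) hnorm
  rw [Real.norm_eq_abs, abs_mul, abs_pow, Real.abs_exp, ← Real.rpow_natCast |y| i]

lemma poly_gauss_bounded (Q : Polynomial ℝ) {b : ℝ} (hb : 0 < b) :
    ∃ C : ℝ, ∀ y, |Q.eval y * Real.exp (-b*y^2)| ≤ C := by
  have ht := poly_gauss_tendsto Q hb
  have h1 : ∀ᶠ y in cocompact ℝ, |Q.eval y * Real.exp (-b*y^2)| ≤ 1 := by
    have := ht (Metric.ball_mem_nhds (0:ℝ) one_pos)
    filter_upwards [this] with y hy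
    rw [Set.mem_preimage, Metric.mem_ball, Real.dist_eq, sub_zero] at hy
    exact hy.le
  rw [Filter.eventually_iff, Filter.mem_cocompact] at h1
  obtain ⟨K, hK, hKsub⟩ := h1
  have hcont : Continuous fun y : ℝ => Q.eval y * Real.exp (-b*y^2) := by
    exact Q.continuous.mul (Real.continuous_exp.comp (by continuity))
  obtain ⟨C, hC⟩ := hK.exists_bound_of_continuousOn hcont.continuousOn
  refine ⟨max C 1, fun y => ?_⟩
  by_cases hy : y ∈ K
  · exact le_trans (le_of_eq (Real.norm_eq_abs _).symm |>.trans (hC y hy)) (le_max_left _ _)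
  · exact le_trans (hKsub hy) (le_max_right _ _)

lemma poly_gauss_integrable (Q : Polynomial ℝ) {b : ℝ} (hb : 0 < b) :
    Integrable (fun y => Q.eval y * Real.exp (-b*y^2)) := by
  obtain ⟨C, hC⟩ := poly_gauss_bounded Q (half_pos hb)
  have hcont : Continuous fun y : ℝ => Q.eval y * Real.exp (-b*y^2) := by
    exact Q.continuous.mul (Real.continuous_exp.comp (by continuity))
  refine Integrable.mono' ((integrable_exp_neg_mul_sq (half_pos hb)).const_mul C)
    hcont.aestronglyMeasurable ?_
  refine ae_of_all _ fun y => ?_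
  have he : Real.exp (-b*y^2) = Real.exp (-(b/2)*y^2) * Real.exp (-(b/2)*y^2) := by
    rw [← Real.exp_add]; ring_nf
  rw [Real.norm_eq_abs, he, ← mul_assoc, abs_mul]
  rw [Real.abs_exp]
  exact mul_le_mul_of_nonneg_right (hC y) (Real.exp_pos _).le

/-- functions that are a polynomial times the gaussian `exp(-(ℏ/4)y²)` -/
def Gauss4 (hbar : ℝ) (f : ℝ → ℝ) : Prop :=
  ∃ Q : Polynomial ℝ, ∀ y, f y = Q.eval y * Real.exp (-(hbar/4)*y^2)

namespace Gauss4
variable {hbar : ℝ} {f g : ℝ → ℝ}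

lemma add (hf : Gauss4 hbar f) (hg : Gauss4 hbar g) : Gauss4 hbar (fun y => f y + g y) := by
  obtain ⟨Q, hQ⟩ := hf; obtain ⟨R, hR⟩ := hg
  exact ⟨Q + R, fun y => by simp [hQ, hR]; ring⟩

lemma sub (hf : Gauss4 hbar f) (hg : Gauss4 hbar g) : Gauss4 hbar (fun y => f y - g y) := by
  obtain ⟨Q, hQ⟩ := hf; obtain ⟨R, hR⟩ := hg
  exact ⟨Q - R, fun y => by simp [hQ, hR]; ring⟩

lemma const_mul (hf : Gauss4 hbar f) (c : ℝ) : Gauss4 hbar (fun y => c * f y) := by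
  obtain ⟨Q, hQ⟩ := hf
  exact ⟨C c * Q, fun y => by simp [hQ]; ring⟩

lemma sum {ι : Type*} (s : Finset ι) (F : ι → ℝ → ℝ) (hF : ∀ i ∈ s, Gauss4 hbar (F i)) :
    Gauss4 hbar (fun y => ∑ i ∈ s, F i y) := by
  classical
  induction s using Finset.induction_on with
  | empty => exact ⟨0, fun y => by simp⟩
  | @insert a s' hx ih =>
    simp only [Finset.sum_insert hx]
    exact (hF a (Finset.mem_insert_self a s')).add
      (ih fun i hi => hF i (Finset.mem_insert_of_mem hi))

lemma zero : Gauss4 hbar (fun _ => 0) := ⟨0, fun y => by simp⟩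

lemma integrable (hh : 0 < hbar) (hf : Gauss4 hbar f) (p : ℝ) :
    Integrable (fun y => ((f y : ℝ) : ℂ) * Complex.exp (Complex.I * (p:ℂ) * (y:ℂ))) := by
  obtain ⟨Q, hQ⟩ := hf
  have hint : Integrable (fun y => ((f y : ℝ) : ℂ)) := by
    have := (poly_gauss_integrable Q (show (0:ℝ) < hbar/4 by linarith)).ofReal (𝕜 := ℂ)
    exact this.congr (ae_of_all _ fun y => congrArg Complex.ofReal (hQ y).symm)
  have hmeas : AEStronglyMeasurable (fun y : ℝ => Complex.exp (Complex.I * (p:ℂ) * (y:ℂ))) volume := by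
    refine Continuous.aestronglyMeasurable ?_
    exact Complex.continuous_exp.comp (by continuity)
  have hbdd : ∃ C : ℝ, ∀ y : ℝ, ‖Complex.exp (Complex.I * (p:ℂ) * (y:ℂ))‖ ≤ C := by
    refine ⟨1, fun y => ?_⟩
    rw [Complex.norm_exp]
    simp
  have hbm : Integrable (fun y : ℝ =>
      Complex.exp (Complex.I * (p:ℂ) * (y:ℂ)) * ((f y : ℝ) : ℂ)) :=
    Integrable.bdd_mul hint hmeas (ae_of_all _ hbdd.choose_spec)
  exact hbm.congr (ae_of_all _ fun y => mul_comm _ _)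

end Gauss4

lemma G_gauss4 (hbar x : ℝ) (hh : 0 < hbar) (j k : ℕ) :
    Gauss4 hbar (fun y => psiH hbar j (x - hbar*y/2) * psiH hbar k (x + hbar*y/2)) := by
  refine ⟨C (cc hbar j * cc hbar k * Real.exp (-x^2/hbar)) *
      ((Hpol j).comp (C (x/Real.sqrt hbar) - C (hbar/(2*Real.sqrt hbar)) * X)) *
      ((Hpol k).comp (C (x/Real.sqrt hbar) + C (hbar/(2*Real.sqrt hbar)) * X)), fun y => ?_⟩
  have hbne : Real.sqrt hbar ≠ 0 := ne_of_gt (Real.sqrt_pos.2 hh)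
  have hne : hbar ≠ 0 := hh.ne'
  show psiH hbar j (x - hbar*y/2) * psiH hbar k (x + hbar*y/2) = _
  rw [psiH_eq, psiH_eq]
  simp only [eval_mul, eval_comp, eval_add, eval_sub, eval_C, eval_X]
  have harg1 : (x - hbar*y/2)/Real.sqrt hbar
      = x/Real.sqrt hbar - hbar/(2*Real.sqrt hbar)*y := by
    field_simp
  have harg2 : (x + hbar*y/2)/Real.sqrt hbar
      = x/Real.sqrt hbar + hbar/(2*Real.sqrt hbar)*y := by
    field_simp
  have hexp : Real.exp (-(x - hbar*y/2)^2/(2*hbar)) * Real.exp (-(x + hbar*y/2)^2/(2*hbar))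
      = Real.exp (-x^2/hbar) * Real.exp (-(hbar/4)*y^2) := by
    rw [← Real.exp_add, ← Real.exp_add]
    congr 1
    field_simp
    ring
  rw [harg1, harg2]
  linear_combination (cc hbar j * cc hbar k *
    eval (x/Real.sqrt hbar - hbar/(2*Real.sqrt hbar)*y) (Hpol j) *
    eval (x/Real.sqrt hbar + hbar/(2*Real.sqrt hbar)*y) (Hpol k)) * hexp

lemma key_real {hbar : ℝ} (hh : 0 < hbar) (N : ℕ) (hN : 1 ≤ N) (u v : ℝ) :
    Real.sqrt (hbar/2) * ∑ j ∈ Finset.range (N-1), Real.sqrt ((j:ℝ)+1) *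
        (psiH hbar (j+1) u * psiH hbar j v - psiH hbar j u * psiH hbar (j+1) v)
    = (∑ k ∈ Finset.range N, (hbar/2) *
        (Real.sqrt ((k:ℝ)/(2*hbar)) * (psiH hbar k u * psiH hbar (k-1) v)
         - Real.sqrt (((k:ℝ)+1)/(2*hbar)) * (psiH hbar k u * psiH hbar (k+1) v)
         - Real.sqrt ((k:ℝ)/(2*hbar)) * (psiH hbar (k-1) u * psiH hbar k v)
         + Real.sqrt (((k:ℝ)+1)/(2*hbar)) * (psiH hbar (k+1) u * psiH hbar k v)))
      + (1/2) * Real.sqrt (hbar*N/2) *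
        (psiH hbar (N-1) u * psiH hbar N v - psiH hbar N u * psiH hbar (N-1) v) := by
  obtain ⟨M, rfl⟩ : ∃ M, N = M+1 := ⟨N-1, (Nat.succ_pred_eq_of_pos hN).symm⟩
  simp only [Nat.add_sub_cancel]
  set f : ℕ → ℝ := fun m => Real.sqrt ((m:ℝ)/(2*hbar)) *
    (psiH hbar m u * psiH hbar (m-1) v - psiH hbar (m-1) u * psiH hbar m v) with hf
  have hs : ∀ m : ℕ, Real.sqrt (hbar/2) * Real.sqrt ((m:ℝ)+1)
      = hbar * Real.sqrt (((m:ℝ)+1)/(2*hbar)) := by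
    intro m
    refine eq_of_sq (mul_nonneg (Real.sqrt_nonneg _) (Real.sqrt_nonneg _))
      (mul_nonneg hh.le (Real.sqrt_nonneg _)) ?_
    rw [mul_pow, mul_pow, Real.sq_sqrt (by positivity), Real.sq_sqrt (by positivity),
      Real.sq_sqrt (by positivity)]
    field_simp
  have hsN : Real.sqrt (hbar*((M:ℝ)+1)/2) = Real.sqrt (hbar/2) * Real.sqrt ((M:ℝ)+1) := by
    rw [← Real.sqrt_mul (by positivity)]
    congr 1
    ring
  have hf0 : f 0 = 0 := by simp [hf]
  have hterm : ∀ k : ℕ, (hbar/2) *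
        (Real.sqrt ((k:ℝ)/(2*hbar)) * (psiH hbar k u * psiH hbar (k-1) v)
         - Real.sqrt (((k:ℝ)+1)/(2*hbar)) * (psiH hbar k u * psiH hbar (k+1) v)
         - Real.sqrt ((k:ℝ)/(2*hbar)) * (psiH hbar (k-1) u * psiH hbar k v)
         + Real.sqrt (((k:ℝ)+1)/(2*hbar)) * (psiH hbar (k+1) u * psiH hbar k v))
      = (hbar/2) * f k + (hbar/2) * f (k+1) := by
    intro k
    simp only [hf, Nat.add_sub_cancel]
    push_cast
    ring
  rw [Finset.mul_sum, Finset.sum_congr rfl (fun k _ => hterm k), Finset.sum_add_distrib,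
    Finset.sum_range_succ' (fun k => (hbar/2) * f k) M,
    Finset.sum_range_succ (fun k => (hbar/2) * f (k+1)) M, hf0]
  push_cast
  rw [hsN]
  rw [Finset.sum_congr rfl (fun (j : ℕ) hj => show Real.sqrt (hbar/2) * (Real.sqrt ((j:ℝ)+1) *
      (psiH hbar (j+1) u * psiH hbar j v - psiH hbar j u * psiH hbar (j+1) v))
      = 2 * ((hbar/2) * f (j+1)) by
    rw [← mul_assoc, hs j]
    simp only [hf, Nat.add_sub_cancel]
    push_cast
    ring)]
  rw [← Finset.mul_sum]
  simp only [hf, Nat.add_sub_cancel]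
  have hsM := hs M
  push_cast at hsM ⊢
  linear_combination (1/2 * (psiH hbar (M+1) u * psiH hbar M v
    - psiH hbar M u * psiH hbar (M+1) v)) * hsM


/-- The Weyl symbol of `H_N` differs from `p·σ_{P_{<N}}^ℏ(x,p)` by an explicit
boundary term built from the `N`-th and `(N-1)`-th Hermite functions. -/
theorem sigmaH_eq_p_sigmaP_plus_boundary (hbar : ℝ) (hh : 0 < hbar) (N : ℕ) (hN : 1 ≤ N)
    (x p : ℝ) :
    sigmaH hbar N x p = (p : ℂ) * sigmaP hbar N x p +
      (Complex.I / 2) * (Real.sqrt (hbar * N / 2) : ℂ) *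
        ∫ y : ℝ,
          ((hbar * (psiH hbar (N-1) (x - hbar*y/2) * psiH hbar N (x + hbar*y/2)
            - psiH hbar N (x - hbar*y/2) * psiH hbar (N-1) (x + hbar*y/2)) : ℝ) : ℂ) *
            Complex.exp (Complex.I * (p:ℂ) * (y:ℂ)) := by
  -- notation
  set e : ℝ → ℂ := fun y => Complex.exp (Complex.I * (p:ℂ) * (y:ℂ)) with he
  set F : ℝ → ℝ := fun y => KerK hbar N (x - hbar*y/2) (x + hbar*y/2) with hF
  set D : ℝ → ℝ := fun y => ∑ k ∈ Finset.range N, (hbar/2) *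
        (Real.sqrt ((k:ℝ)/(2*hbar)) * (psiH hbar k (x - hbar*y/2) * psiH hbar (k-1) (x + hbar*y/2))
         - Real.sqrt (((k:ℝ)+1)/(2*hbar)) * (psiH hbar k (x - hbar*y/2) * psiH hbar (k+1) (x + hbar*y/2))
         - Real.sqrt ((k:ℝ)/(2*hbar)) * (psiH hbar (k-1) (x - hbar*y/2) * psiH hbar k (x + hbar*y/2))
         + Real.sqrt (((k:ℝ)+1)/(2*hbar)) * (psiH hbar (k+1) (x - hbar*y/2) * psiH hbar k (x + hbar*y/2))) with hD
  set B : ℝ → ℝ := fun y => hbar * (psiH hbar (N-1) (x - hbar*y/2) * psiH hbar N (x + hbar*y/2)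
            - psiH hbar N (x - hbar*y/2) * psiH hbar (N-1) (x + hbar*y/2)) with hB
  -- Gauss4 properties
  have hG : ∀ j k : ℕ, Gauss4 hbar
      (fun y => psiH hbar j (x - hbar*y/2) * psiH hbar k (x + hbar*y/2)) :=
    fun j k => G_gauss4 hbar x hh j k
  have hGF : Gauss4 hbar F := by
    simp only [hF, KerK]
    exact Gauss4.sum _ _ (fun k _ => hG k k)
  have hGD : Gauss4 hbar D := by
    refine Gauss4.sum _ _ (fun k _ => ?_)
    exact (((((hG k (k-1)).const_mul _).sub ((hG k (k+1)).const_mul _)).sub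
      ((hG (k-1) k).const_mul _)).add ((hG (k+1) k).const_mul _)).const_mul (hbar/2)
  have hGB : Gauss4 hbar B := ((hG (N-1) N).sub (hG N (N-1))).const_mul hbar
  have intF := hGF.integrable hh p
  have intD := hGD.integrable hh p
  have intB := hGB.integrable hh p
  -- derivative of F
  have hFder : ∀ y, HasDerivAt F (D y) y := by
    intro y
    simp only [hF, KerK, hD]
    refine HasDerivAt.fun_sum (fun k _ => ?_)
    have hu : HasDerivAt (fun y : ℝ => x - hbar*y/2) (-(hbar/2)) y := by
      simpa using (hasDerivAt_const y x).fun_sub (((hasDerivAt_id y).const_mul hbar).div_const 2)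
    have hv : HasDerivAt (fun y : ℝ => x + hbar*y/2) (hbar/2) y := by
      simpa using (hasDerivAt_const y x).fun_add (((hasDerivAt_id y).const_mul hbar).div_const 2)
    have hk1 := (psi_hasDerivAt hh k (x - hbar*y/2)).comp y hu
    have hk2 := (psi_hasDerivAt hh k (x + hbar*y/2)).comp y hv
    simp only [Function.comp_def] at hk1 hk2
    refine (hk1.fun_mul hk2).congr_deriv ?_
    ring
  -- derivative of g = F * e
  have heder : ∀ y : ℝ, HasDerivAt (fun t : ℝ => Complex.exp (Complex.I * (p:ℂ) * (t:ℂ)))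
      (Complex.I * (p:ℂ) * Complex.exp (Complex.I * (p:ℂ) * (y:ℂ))) y := by
    intro y
    have hin : HasDerivAt (fun w : ℂ => Complex.I * (p:ℂ) * w) (Complex.I * (p:ℂ)) (y:ℂ) := by
      simpa using (hasDerivAt_id (y:ℂ)).const_mul (Complex.I * (p:ℂ))
    have hout : HasDerivAt (fun w : ℂ => Complex.exp (Complex.I * (p:ℂ) * w))
        (Complex.exp (Complex.I * (p:ℂ) * (y:ℂ)) * (Complex.I * (p:ℂ))) (y:ℂ) := by
      simpa [Function.comp_def] using (Complex.hasDerivAt_exp (Complex.I * (p:ℂ) * (y:ℂ))).comp (y:ℂ) hin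
    have := hout.comp_ofReal
    convert this using 1
    ring
  have hgder : ∀ y : ℝ, HasDerivAt (fun t => ((F t : ℝ) : ℂ) * e t)
      (((D y : ℝ) : ℂ) * e y + ((F y : ℝ) : ℂ) * (Complex.I * (p:ℂ) * e y)) y := by
    intro y
    have h1 : HasDerivAt (fun t : ℝ => ((F t : ℝ) : ℂ)) ((D y : ℝ) : ℂ) y :=
      (hFder y).ofReal_comp
    have := h1.fun_mul (heder y)
    convert this using 1
  have hg'int : Integrable (fun y => ((D y : ℝ) : ℂ) * e y
      + ((F y : ℝ) : ℂ) * (Complex.I * (p:ℂ) * e y)) := by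
    refine intD.add ?_
    refine ((intF.const_mul (Complex.I * (p:ℂ))).congr (ae_of_all _ fun y => ?_))
    ring
  have hzero : ∫ y, (((D y : ℝ) : ℂ) * e y + ((F y : ℝ) : ℂ) * (Complex.I * (p:ℂ) * e y)) = 0 :=
    integral_eq_zero_of_hasDerivAt_of_integrable hgder hg'int intF
  rw [integral_add intD (((intF.const_mul (Complex.I * (p:ℂ))).congr
    (ae_of_all _ fun y => by ring)))] at hzero
  have hIBP : ∫ y, ((D y : ℝ) : ℂ) * e y
      = -(Complex.I * (p:ℂ)) * ∫ y, ((F y : ℝ) : ℂ) * e y := by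
    have h2 : ∫ y, ((F y : ℝ) : ℂ) * (Complex.I * (p:ℂ) * e y)
        = (Complex.I * (p:ℂ)) * ∫ y, ((F y : ℝ) : ℂ) * e y := by
      rw [← MeasureTheory.integral_const_mul]
      congr 1
      funext y
      ring
    rw [h2] at hzero
    linear_combination hzero
  -- pointwise kernel identity
  have hker : ∀ y : ℝ, (hbar : ℂ) * KerQ hbar N (x - hbar*y/2) (x + hbar*y/2) * e y
      = (Complex.I * (hbar:ℂ)) * (((D y : ℝ) : ℂ) * e y)
        + ((Complex.I / 2) * ((Real.sqrt (hbar * N / 2) : ℝ) : ℂ)) * (((B y : ℝ) : ℂ) * e y) := by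
    intro y
    have hkr := key_real hh N hN (x - hbar*y/2) (x + hbar*y/2)
    have hc : ((Real.sqrt (hbar/2) * ∑ j ∈ Finset.range (N-1), Real.sqrt ((j:ℝ)+1) *
        (psiH hbar (j+1) (x - hbar*y/2) * psiH hbar j (x + hbar*y/2)
          - psiH hbar j (x - hbar*y/2) * psiH hbar (j+1) (x + hbar*y/2)) : ℝ) : ℂ)
        = ((D y : ℝ) : ℂ) + (((1/2) * Real.sqrt (hbar*N/2) *
            (psiH hbar (N-1) (x - hbar*y/2) * psiH hbar N (x + hbar*y/2)
             - psiH hbar N (x - hbar*y/2) * psiH hbar (N-1) (x + hbar*y/2)) : ℝ) : ℂ) := by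
      rw [← Complex.ofReal_add]
      exact congrArg Complex.ofReal (by rw [hkr])
    rw [KerQ]
    simp only [hB]
    push_cast at hc ⊢
    linear_combination (Complex.I * (hbar:ℂ) * e y) * hc
  -- assemble
  rw [sigmaH]
  calc (∫ y : ℝ, (hbar : ℂ) * KerQ hbar N (x - hbar*y/2) (x + hbar*y/2) * e y)
      = ∫ y : ℝ, ((Complex.I * (hbar:ℂ)) * (((D y : ℝ) : ℂ) * e y)
        + ((Complex.I / 2) * ((Real.sqrt (hbar * N / 2) : ℝ) : ℂ)) * (((B y : ℝ) : ℂ) * e y)) := by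
        exact integral_congr_ae (ae_of_all _ hker)
    _ = (Complex.I * (hbar:ℂ)) * (∫ y, ((D y : ℝ) : ℂ) * e y)
        + ((Complex.I / 2) * ((Real.sqrt (hbar * N / 2) : ℝ) : ℂ)) * ∫ y, ((B y : ℝ) : ℂ) * e y := by
        rw [integral_add (intD.const_mul _) (intB.const_mul _),
          MeasureTheory.integral_const_mul, MeasureTheory.integral_const_mul]
    _ = (p : ℂ) * sigmaP hbar N x p +
        (Complex.I / 2) * ((Real.sqrt (hbar * N / 2) : ℝ) : ℂ) * ∫ y, ((B y : ℝ) : ℂ) * e y := by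
        rw [hIBP, sigmaP]
        have : ∫ y : ℝ, ((hbar * KerK hbar N (x - hbar*y/2) (x + hbar*y/2) : ℝ) : ℂ) *
            Complex.exp (Complex.I * (p:ℂ) * (y:ℂ))
            = (hbar : ℂ) * ∫ y, ((F y : ℝ) : ℂ) * e y := by
          rw [← MeasureTheory.integral_const_mul]
          congr 1
          funext y
          push_cast
          ring
        rw [this]
        have hI2 : Complex.I * Complex.I = -1 := Complex.I_mul_I
        linear_combination (-((p:ℂ) * (hbar:ℂ) * ∫ y, ((F y : ℝ) : ℂ) * e y)) * hI2
    _ = _ := by rfl
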